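/- Let d ≥ 1, let 0 < ε ≤ 1, let k ≥ 1, and let C be a finite set of points of Euclidean space ℝ^d. Suppose C is covered by k closed balls B₁, …, B_k, where Bᵢ has center cᵢ ∈ ℝ^d and radius rᵢ > 0. Then for each i ∈ {1, …, k} there exist a subset Sᵢ ⊆ C ∩ Bᵢ with |Sᵢ| ≤ ⌈2/ε⌉ + 1 and a point cᵢ' ∈ ℝ^d such that whenever Sᵢ is nonempty, (cᵢ', ρᵢ) is a minimum enclosing ball of Sᵢ for some ρᵢ — i.e., Sᵢ ⊆ closedBall(cᵢ', ρᵢ) and ρᵢ ≤ ρ' whenever Sᵢ ⊆ closedBall(c', ρ') — and moreover C is contained in the union over those i with Sᵢ nonempty of the closed balls of radius (1 + ε)·rᵢ around cᵢ'. -/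

import Mathlib

set_option linter.unusedSectionVars false
set_option maxHeartbeats 1000000
open Metric Finset InnerProductSpace

variable {E : Type*} [NormedAddCommGroup E] [InnerProductSpace ℝ E]

lemma exists_meb [ProperSpace E] (S : Finset E) (hS : S.Nonempty) :
    ∃ (c : E) (ρ : ℝ), (∀ s ∈ S, dist s c ≤ ρ) ∧
      ∀ (c' : E) (ρ' : ℝ), (∀ s ∈ S, dist s c' ≤ ρ') → ρ ≤ ρ' := by
  obtain ⟨s₀, hs₀⟩ := hS
  have hS : S.Nonempty := ⟨s₀, hs₀⟩
  set f : E → ℝ := fun x => S.sup' hS (fun s => dist s x) with hf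
  have hfc : Continuous f :=
    Continuous.finset_sup'_apply hS fun s _ => continuous_const.dist continuous_id
  have hfmem : ∀ x, ∀ s ∈ S, dist s x ≤ f x := fun x s hs => Finset.le_sup' (fun s => dist s x) hs
  have hfle : ∀ x R, (∀ s ∈ S, dist s x ≤ R) → f x ≤ R := fun x R h => Finset.sup'_le _ _ h
  obtain ⟨c, hcmem, hcmin⟩ := (isCompact_closedBall s₀ (f s₀)).exists_isMinOn
    ⟨s₀, mem_closedBall_self (le_trans dist_nonneg (hfmem s₀ s₀ hs₀))⟩ hfc.continuousOn
  refine ⟨c, f c, fun s hs => hfmem c s hs, fun c' ρ' h => ?_⟩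
  have h1 : f c' ≤ ρ' := hfle c' ρ' h
  rcases le_or_gt (dist c' s₀) (f s₀) with hin | hout
  · exact le_trans (hcmin (by simpa [mem_closedBall, dist_comm] using hin)) h1
  · have : f s₀ ≤ f c' := le_trans hout.le (by simpa [dist_comm] using hfmem c' s₀ hs₀)
    exact le_trans (le_trans (hcmin (mem_closedBall_self
      (le_trans dist_nonneg (hfmem s₀ s₀ hs₀)))) this) h1

lemma meb_pythagoras (S : Finset E) (hS : S.Nonempty) (c : E) (ρ : ℝ)
    (hcov : ∀ s ∈ S, dist s c ≤ ρ)
    (hmin : ∀ (c' : E) (ρ' : ℝ), (∀ s ∈ S, dist s c' ≤ ρ') → ρ ≤ ρ') (x : E) :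
    ∃ s ∈ S, ρ ^ 2 + dist x c ^ 2 ≤ dist x s ^ 2 := by
  obtain ⟨s₀, hs₀⟩ := hS
  have hρ0 : 0 ≤ ρ := le_trans dist_nonneg (hcov s₀ hs₀)
  by_contra hcon
  push_neg at hcon
  set D : ℝ := dist x c with hD
  set η : ℝ := S.inf' ⟨s₀, hs₀⟩ (fun s => ρ ^ 2 + D ^ 2 - dist x s ^ 2) with hη
  have hη0 : 0 < η := by
    rw [hη]; refine (Finset.lt_inf'_iff _).2 ?_
    intro s hs
    have := hcon s hs
    linarith
  have hηle : ∀ s ∈ S, η ≤ ρ ^ 2 + D ^ 2 - dist x s ^ 2 :=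
    fun s hs => Finset.inf'_le _ hs
  set θ : ℝ := min 1 (η / (2 * D ^ 2 + 1)) with hθ
  have hθ0 : 0 < θ := lt_min one_pos (div_pos hη0 (by positivity))
  have hθ1 : θ ≤ 1 := min_le_left _ _
  have hθD : θ * (2 * D ^ 2) ≤ η := by
    have h1 : θ ≤ η / (2 * D ^ 2 + 1) := min_le_right _ _
    have h2 : θ * (2 * D ^ 2 + 1) ≤ η := by
      rw [← div_mul_cancel₀ η (show (2 * D ^ 2 + 1 : ℝ) ≠ 0 by positivity)]
      exact mul_le_mul_of_nonneg_right h1 (by positivity)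
    nlinarith [hθ0]
  set cθ : E := c + θ • (x - c) with hcθ
  have hkey : ∀ s ∈ S, dist s cθ ^ 2 ≤ ρ ^ 2 - θ * η / 2 := by
    intro s hs
    have h1 : dist s cθ ^ 2 = ‖s - c‖ ^ 2 - 2 * θ * ⟪s - c, x - c⟫_ℝ + θ ^ 2 * ‖x - c‖ ^ 2 := by
      rw [dist_eq_norm, hcθ]
      have : s - (c + θ • (x - c)) = (s - c) - θ • (x - c) := by abel
      rw [this, norm_sub_sq_real, real_inner_smul_right, norm_smul]
      simp [abs_of_pos hθ0]
      ring
    have h2 : dist x s ^ 2 = ‖x - c‖ ^ 2 - 2 * ⟪s - c, x - c⟫_ℝ + ‖s - c‖ ^ 2 := by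
      rw [dist_eq_norm]
      have : x - s = (x - c) - (s - c) := by abel
      rw [this, norm_sub_sq_real, real_inner_comm]
    have h3 : η ≤ ρ ^ 2 + D ^ 2 - dist x s ^ 2 := hηle s hs
    have h4 : ‖s - c‖ ≤ ρ := by rw [← dist_eq_norm]; exact hcov s hs
    have h5 : (0:ℝ) ≤ ‖s - c‖ := norm_nonneg _
    have hDnorm : D = ‖x - c‖ := by rw [hD, dist_eq_norm]
    rw [hDnorm] at h3 hθD
    have hip : η + ‖s - c‖ ^ 2 - ρ ^ 2 ≤ 2 * ⟪s - c, x - c⟫_ℝ := by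
      rw [h2] at h3; linarith
    have h4sq : ‖s - c‖ ^ 2 ≤ ρ ^ 2 := by nlinarith
    rw [h1]
    nlinarith [mul_le_mul_of_nonneg_left hip hθ0.le,
      mul_nonneg (sub_nonneg.2 hθ1) (sub_nonneg.2 h4sq),
      mul_le_mul_of_nonneg_left hθD hθ0.le]
  set ρ₂ : ℝ := Real.sqrt (ρ ^ 2 - θ * η / 2) with hρ₂
  have hnn : 0 ≤ ρ ^ 2 - θ * η / 2 := le_trans (sq_nonneg _) (hkey s₀ hs₀)
  have hcov2 : ∀ s ∈ S, dist s cθ ≤ ρ₂ := by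
    intro s hs
    rw [hρ₂, show dist s cθ = Real.sqrt (dist s cθ ^ 2) by
      rw [Real.sqrt_sq dist_nonneg]]
    exact Real.sqrt_le_sqrt (hkey s hs)
  have hle : ρ ≤ ρ₂ := hmin cθ ρ₂ hcov2
  have : ρ₂ ^ 2 = ρ ^ 2 - θ * η / 2 := Real.sq_sqrt hnn
  nlinarith [Real.sqrt_nonneg (ρ ^ 2 - θ * η / 2), hθ0, hη0]

lemma coreset_step [ProperSpace E] [DecidableEq E] (ε r : ℝ) (hε0 : 0 < ε) (hr : 0 < r)
    (cc : E) (P : Finset E) (hP : ∀ p ∈ P, dist p cc ≤ r)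
    (S : Finset E) (hSP : S ⊆ P) (hSne : S.Nonempty)
    (c' : E) (ρ : ℝ) (hcov : ∀ s ∈ S, dist s c' ≤ ρ)
    (hmin : ∀ (c'' : E) (ρ' : ℝ), (∀ s ∈ S, dist s c'' ≤ ρ') → ρ ≤ ρ')
    (p : E) (hp : p ∈ P) (hfar : (1 + ε) * r < dist p c') :
    ∃ (c₂ : E) (ρ₂ : ℝ), (∀ s ∈ insert p S, dist s c₂ ≤ ρ₂) ∧
      (∀ (c'' : E) (ρ' : ℝ), (∀ s ∈ insert p S, dist s c'' ≤ ρ') → ρ₂ ≤ ρ') ∧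
      2 * ((1 + ε) * r) * ((1 + ε) * r - ρ₂) < ((1 + ε) * r - ρ) * ((1 + ε) * r + ρ) := by
  obtain ⟨c₂, ρ₂, hcov₂, hmin₂⟩ := exists_meb (insert p S) (insert_nonempty p S)
  refine ⟨c₂, ρ₂, hcov₂, hmin₂, ?_⟩
  set K : ℝ := (1 + ε) * r with hK
  have hrK : r < K := by nlinarith
  have hρr : ρ ≤ r := hmin cc r (fun s hs => hP s (hSP hs))
  have hρ₂r : ρ₂ ≤ r := hmin₂ cc r (fun s hs => by
    rcases Finset.mem_insert.1 hs with h | h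
    · exact h ▸ hP p hp
    · exact hP s (hSP h))
  obtain ⟨s₀, hs₀⟩ := hSne
  have hρ0 : 0 ≤ ρ := le_trans dist_nonneg (hcov s₀ hs₀)
  obtain ⟨s, hs, hpyth⟩ := meb_pythagoras S ⟨s₀, hs₀⟩ c' ρ hcov hmin c₂
  have hsρ₂ : dist c₂ s ≤ ρ₂ := by
    rw [dist_comm]; exact hcov₂ s (Finset.mem_insert_of_mem hs)
  have hq : ρ ^ 2 + dist c₂ c' ^ 2 ≤ ρ₂ ^ 2 := by
    refine le_trans hpyth ?_
    have : 0 ≤ dist c₂ s := dist_nonneg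
    nlinarith
  have htri : K < ρ₂ + dist c₂ c' := by
    have h1 : dist p c' ≤ dist p c₂ + dist c₂ c' := dist_triangle _ _ _
    have h2 : dist p c₂ ≤ ρ₂ := hcov₂ p (Finset.mem_insert_self p S)
    linarith
  rcases le_or_gt K ρ₂ with hcase | hcase
  · have hρ₂K : ρ₂ ≤ K := le_trans hρ₂r hrK.le
    have : ρ₂ = K := le_antisymm hρ₂K hcase
    rw [this]
    nlinarith
  · have hδ : K - ρ₂ < dist c₂ c' := by linarith
    have hδ0 : 0 ≤ K - ρ₂ := by linarith
    have : (K - ρ₂) ^ 2 < dist c₂ c' ^ 2 := by nlinarith [dist_nonneg (x := c₂) (y := c')]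
    nlinarith

lemma cluster_coreset [ProperSpace E] (ε : ℝ) (hε0 : 0 < ε) (hε1 : ε ≤ 1)
    (cc : E) (r : ℝ) (hr : 0 < r) (P : Finset E)
    (hP : ∀ p ∈ P, dist p cc ≤ r) (hPne : P.Nonempty) :
    ∃ (S : Finset E) (c' : E), S ⊆ P ∧ S.Nonempty ∧ S.card ≤ ⌈(2:ℝ)/ε⌉₊ + 1 ∧
      (∃ ρ : ℝ, (∀ s ∈ S, dist s c' ≤ ρ) ∧
        ∀ (c'' : E) (ρ' : ℝ), (∀ s ∈ S, dist s c'' ≤ ρ') → ρ ≤ ρ') ∧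
      ∀ p ∈ P, dist p c' ≤ (1 + ε) * r := by
  set K : ℝ := (1 + ε) * r with hK
  have claim : ∀ n : ℕ, ∃ (S : Finset E) (c' : E) (ρ : ℝ),
      S ⊆ P ∧ S.Nonempty ∧ S.card ≤ n + 1 ∧
      (∀ s ∈ S, dist s c' ≤ ρ) ∧
      (∀ (c'' : E) (ρ' : ℝ), (∀ s ∈ S, dist s c'' ≤ ρ') → ρ ≤ ρ') ∧
      ((∀ p ∈ P, dist p c' ≤ K) ∨
        (((n : ℝ) + 2) * (K - ρ) ≤ 2 * K ∧
          (n ≠ 0 → ((n : ℝ) + 2) * (K - ρ) < 2 * K))) := by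
    intro n
    induction n with
    | zero =>
      obtain ⟨p₀, hp₀⟩ := hPne
      obtain ⟨c', ρ, hcov, hmin⟩ := exists_meb {p₀} (Finset.singleton_nonempty p₀)
      refine ⟨{p₀}, c', ρ, by simpa using hp₀, Finset.singleton_nonempty p₀, by simp, hcov,
        hmin, Or.inr ⟨?_, by simp⟩⟩
      have h0 : 0 ≤ ρ := le_trans dist_nonneg (hcov p₀ (Finset.mem_singleton_self p₀))
      push_cast
      linarith
    | succ n ih =>
      classical
      obtain ⟨S, c', ρ, hSP, hSne, hcard, hcov, hmin, hdisj⟩ := ih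
      by_cases hcovd : ∀ p ∈ P, dist p c' ≤ K
      · exact ⟨S, c', ρ, hSP, hSne, Nat.le_succ_of_le hcard, hcov, hmin, Or.inl hcovd⟩
      rcases hdisj with hdone | ⟨hinv, _⟩
      · exact absurd hdone hcovd
      push_neg at hcovd
      obtain ⟨p, hp, hfar⟩ := hcovd
      obtain ⟨c₂, ρ₂, hcov₂, hmin₂, hstep⟩ :=
        coreset_step ε r hε0 hr cc P hP S hSP hSne c' ρ hcov hmin p hp hfar
      rw [← hK] at hstep
      have hρr : ρ ≤ r := hmin cc r (fun s hs => hP s (hSP hs))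
      have hρ0 : 0 ≤ ρ := le_trans dist_nonneg (hcov hSne.choose hSne.choose_spec)
      have hrK : r < K := by rw [hK]; nlinarith
      have hK0 : 0 < K := lt_trans hr hrK
      have hKρ : 0 ≤ K - ρ := by linarith
      have hn0 : (0:ℝ) ≤ (n : ℝ) := Nat.cast_nonneg n
      have e1 : ((n : ℝ) + 3) * (2 * K * (K - ρ₂)) <
          ((n : ℝ) + 3) * ((K - ρ) * (K + ρ)) :=
        mul_lt_mul_of_pos_left hstep (by linarith)
      have e2 : ((n : ℝ) + 2) * (K - ρ) * (K + ρ) ≤ 2 * K * (K + ρ) :=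
        mul_le_mul_of_nonneg_right hinv (by linarith)
      have key : ((n : ℝ) + 3) * (K - ρ₂) * (2 * K) < 2 * K * (2 * K) := by
        nlinarith [sq_nonneg (K - ρ)]
      have key2 : ((n : ℝ) + 3) * (K - ρ₂) < 2 * K :=
        lt_of_mul_lt_mul_right key (by linarith : (0:ℝ) ≤ 2 * K)
      refine ⟨insert p S, c₂, ρ₂, ?_, Finset.insert_nonempty p S,
        (Finset.card_insert_le p S).trans (Nat.succ_le_succ hcard), hcov₂, hmin₂,
        Or.inr ⟨by push_cast; linarith, fun _ => by push_cast; linarith⟩⟩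
      intro x hx
      rcases Finset.mem_insert.1 hx with h | h
      · exact h ▸ hp
      · exact hSP h
  obtain ⟨S, c', ρ, hSP, hSne, hcard, hcov, hmin, hdisj⟩ := claim ⌈(2:ℝ)/ε⌉₊
  refine ⟨S, c', hSP, hSne, hcard, ⟨ρ, hcov, hmin⟩, ?_⟩
  rcases hdisj with h | ⟨_, hstrict⟩
  · exact h
  exfalso
  set N : ℕ := ⌈(2:ℝ)/ε⌉₊ with hN
  have hN2 : (2:ℝ)/ε ≤ (N : ℝ) := Nat.le_ceil _
  have hNne : N ≠ 0 := by
    have : (0:ℝ) < 2/ε := by positivity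
    intro h
    rw [h] at hN2
    simp at hN2
    linarith
  have hρr : ρ ≤ r := hmin cc r (fun s hs => hP s (hSP hs))
  have hKρ : ε * r ≤ K - ρ := by rw [hK]; nlinarith
  have := hstrict hNne
  have hNε : (N : ℝ) * ε < 2 := by nlinarith
  have : (2:ℝ) ≤ (N:ℝ) * ε := by
    rw [div_le_iff₀ hε0] at hN2
    linarith
  linarith

/-- Correctness content of the (1+ε)-approximation for Euclidean NUkC:
from each optimal cluster one can extract a core-set of size at most `⌈2/ε⌉ + 1`
whose MEB centers, with radii blown up by `(1+ε)`, together cover all clients. -/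
theorem nukc_coresets_cover (d : ℕ) (hd : 1 ≤ d) (ε : ℝ) (hε0 : 0 < ε) (hε1 : ε ≤ 1)
    (k : ℕ) (hk : 1 ≤ k) (C : Finset (EuclideanSpace ℝ (Fin d)))
    (c : Fin k → EuclideanSpace ℝ (Fin d)) (r : Fin k → ℝ) (hr : ∀ i, 0 < r i)
    (hcover : ∀ p ∈ C, ∃ i : Fin k, p ∈ Metric.closedBall (c i) (r i)) :
    ∃ (S : Fin k → Finset (EuclideanSpace ℝ (Fin d)))
      (c' : Fin k → EuclideanSpace ℝ (Fin d)),
      (∀ i : Fin k,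
        (↑(S i) ⊆ (↑C : Set (EuclideanSpace ℝ (Fin d))) ∩ Metric.closedBall (c i) (r i)) ∧
        (S i).card ≤ ⌈(2 : ℝ) / ε⌉₊ + 1 ∧
        ((S i).Nonempty → ∃ ρ : ℝ,
          ↑(S i) ⊆ Metric.closedBall (c' i) ρ ∧
          ∀ (c'' : EuclideanSpace ℝ (Fin d)) (ρ' : ℝ),
            ↑(S i) ⊆ Metric.closedBall c'' ρ' → ρ ≤ ρ')) ∧
      ∀ p ∈ C, ∃ i : Fin k, (S i).Nonempty ∧
        p ∈ Metric.closedBall (c' i) ((1 + ε) * r i) := by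
  classical
  have key : ∀ i : Fin k, ∃ (Si : Finset (EuclideanSpace ℝ (Fin d)))
      (ci : EuclideanSpace ℝ (Fin d)),
      (↑Si ⊆ (↑C : Set (EuclideanSpace ℝ (Fin d))) ∩ Metric.closedBall (c i) (r i)) ∧
      Si.card ≤ ⌈(2:ℝ)/ε⌉₊ + 1 ∧
      (Si.Nonempty → ∃ ρ : ℝ, ↑Si ⊆ Metric.closedBall ci ρ ∧
        ∀ (c'' : EuclideanSpace ℝ (Fin d)) (ρ' : ℝ),
          ↑Si ⊆ Metric.closedBall c'' ρ' → ρ ≤ ρ') ∧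
      (∀ p ∈ C, p ∈ Metric.closedBall (c i) (r i) →
        Si.Nonempty ∧ p ∈ Metric.closedBall ci ((1+ε) * r i)) := by
    intro i
    set P : Finset (EuclideanSpace ℝ (Fin d)) :=
      C.filter (fun p => p ∈ Metric.closedBall (c i) (r i)) with hPdef
    by_cases hPne : P.Nonempty
    · obtain ⟨S, c', hSP, hSne, hcard, ⟨ρ, hcov, hmin⟩, hcover'⟩ :=
        cluster_coreset ε hε0 hε1 (c i) (r i) (hr i) P
          (fun p hp => by
            have := (Finset.mem_filter.1 hp).2
            simpa [Metric.mem_closedBall] using this) hPne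
      refine ⟨S, c', ?_, hcard, fun _ => ⟨ρ, ?_, ?_⟩, fun p hpC hpB => ⟨hSne, ?_⟩⟩
      · intro x hx
        have hxP : x ∈ P := hSP (Finset.mem_coe.1 hx)
        have := Finset.mem_filter.1 hxP
        exact ⟨this.1, this.2⟩
      · intro s hs
        exact Metric.mem_closedBall.2 (hcov s (Finset.mem_coe.1 hs))
      · intro c'' ρ' h
        exact hmin c'' ρ' (fun s hs => Metric.mem_closedBall.1 (h (Finset.mem_coe.2 hs)))
      · have hpP : p ∈ P := Finset.mem_filter.2 ⟨hpC, hpB⟩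
        exact Metric.mem_closedBall.2 (hcover' p hpP)
    · refine ⟨∅, c i, by simp, by simp, by simp, fun p hpC hpB => absurd ?_ hPne⟩
      exact ⟨p, Finset.mem_filter.2 ⟨hpC, hpB⟩⟩
  choose S c' h1 h2 h3 h4 using key
  refine ⟨S, c', fun i => ⟨h1 i, h2 i, h3 i⟩, fun p hp => ?_⟩
  obtain ⟨i, hi⟩ := hcover p hp
  obtain ⟨hne, hmem⟩ := h4 i p hp hi
  exact ⟨i, hne, hmem⟩
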